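/- Let a, t be real numbers and set t̃ := a + 1 − t. Let x₀ : ℝ → ℝ be differentiable at t̃ with x₀(t̃) ≠ 0 and x₀'(t̃) ≠ 0, and define x₁(s) := 1 / x₀(a + 1 − s) for s near t. Then x₁ is differentiable at t with x₁'(t) = x₀'(t̃) / x₀(t̃)², and, setting X^N(s) := s − x₀(s)(1 − x₀(s))/x₀'(s), Y^N(s) := −(1 − x₀(s))²/x₀'(s), X_{SW}(t) := a + 1 − t + x₁(t)(1 − x₁(t))/x₁'(t), Y_{SW}(t) := −(1 − x₁(t))²/x₁'(t), the shear relations hold: X_{SW}(t) = X^N(t̃) + Y^N(t̃) and Y_{SW}(t) = Y^N(t̃). (That is, the south-west branch of the touching-path arctic curve is the image of the analytic continuation of the non-intersecting-path arctic curve under the shear transformation (x, y) ↦ (x + y, y).) -/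

import Mathlib

/-- Shear relation between the south-west branch of the touching-path arctic curve and the
analytic continuation of the non-intersecting-path arctic curve: with `t̃ = a + 1 − t` and
`x₁(s) = 1/x₀(a + 1 − s)`, the function `x₁` is differentiable at `t` with
`x₁'(t) = x₀'(t̃)/x₀(t̃)²`, and
`X_SW(t) = X^N(t̃) + Y^N(t̃)`, `Y_SW(t) = Y^N(t̃)`, where
`X^N(s) = s − x₀(s)(1 − x₀(s))/x₀'(s)`, `Y^N(s) = −(1 − x₀(s))²/x₀'(s)`,
`X_SW(t) = a + 1 − t + x₁(t)(1 − x₁(t))/x₁'(t)`, `Y_SW(t) = −(1 − x₁(t))²/x₁'(t)`. -/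
theorem shear_phenomenon (a t : ℝ) (x₀ : ℝ → ℝ)
    (hdiff : DifferentiableAt ℝ x₀ (a + 1 - t)) (h0 : x₀ (a + 1 - t) ≠ 0)
    (hd : deriv x₀ (a + 1 - t) ≠ 0) :
    DifferentiableAt ℝ (fun s => 1 / x₀ (a + 1 - s)) t ∧
    deriv (fun s => 1 / x₀ (a + 1 - s)) t
        = deriv x₀ (a + 1 - t) / (x₀ (a + 1 - t)) ^ 2 ∧
    a + 1 - t + (1 / x₀ (a + 1 - t)) * (1 - 1 / x₀ (a + 1 - t)) /
          deriv (fun s => 1 / x₀ (a + 1 - s)) t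
      = ((a + 1 - t) - x₀ (a + 1 - t) * (1 - x₀ (a + 1 - t)) / deriv x₀ (a + 1 - t))
        + (-(1 - x₀ (a + 1 - t)) ^ 2 / deriv x₀ (a + 1 - t)) ∧
    -(1 - 1 / x₀ (a + 1 - t)) ^ 2 / deriv (fun s => 1 / x₀ (a + 1 - s)) t
      = -(1 - x₀ (a + 1 - t)) ^ 2 / deriv x₀ (a + 1 - t) := by
  set c := x₀ (a + 1 - t) with hc
  set d := deriv x₀ (a + 1 - t) with hdd
  have hinner : HasDerivAt (fun s : ℝ => a + 1 - s) (-1) t := by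
    simpa using ((hasDerivAt_id t).const_sub (a + 1))
  have hcomp : HasDerivAt (fun s => x₀ (a + 1 - s)) (d * (-1)) t :=
    (hdiff.hasDerivAt.comp t hinner)
  have hinv : HasDerivAt (fun s => 1 / x₀ (a + 1 - s)) (-(d * (-1)) / c ^ 2) t := by
    have h := hcomp.inv h0
    simp only [one_div]
    exact h
  have hinv' : HasDerivAt (fun s => 1 / x₀ (a + 1 - s)) (d / c ^ 2) t := by
    convert hinv using 1; ring
  have hderiv : deriv (fun s => 1 / x₀ (a + 1 - s)) t = d / c ^ 2 := hinv'.deriv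
  refine ⟨hinv'.differentiableAt, hderiv, ?_, ?_⟩ <;> rw [hderiv] <;>
    field_simp <;> ring
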